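/- arXiv:2412.05902 — 3 statements merged into one kernel-verified Lean document; each statement's English description precedes it below -/
import Mathlib

section
/- Let X be a real normed vector space and S a semigroup on X. Suppose D ⊆ X is a closed set such that (i) dist(S(t)B, D) → 0 as t → ∞ for every bounded set B ⊆ X, and (ii) inf_{u ∈ D} ‖S(t)u‖ → +∞ as t → +∞. Then every invariant set C ⊆ X with C ⊆ D is empty. -/
open Set Filter Metric Bornology

/-- `D` attracts the set `B` under the family of maps `S`: the Hausdorff semidistance
`dist(S(t)B, D) = sup_{b ∈ B} inf_{d ∈ D} ‖S(t)b − d‖` tends to `0` as `t → ∞`. -/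
def Attracts {X : Type*} [NormedAddCommGroup X] (S : ℝ → X → X) (B D : Set X) : Prop :=
  ∀ ε > (0 : ℝ), ∃ T : ℝ, ∀ t ≥ T, ∀ b ∈ B, Metric.infDist (S t b) D ≤ ε

/-- If a closed set `D` attracts all bounded sets and `inf_{u ∈ D} ‖S(t)u‖ → +∞` as
`t → +∞`, then every invariant set `C ⊆ D` is empty. -/
theorem stmt0 {X : Type*} [NormedAddCommGroup X] [NormedSpace ℝ X]
    (S : ℝ → X → X) (hS0 : S 0 = id)
    (hSadd : ∀ t s : ℝ, 0 ≤ t → 0 ≤ s → S (t + s) = S t ∘ S s)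
    (D : Set X) (hD : IsClosed D)
    (hattr : ∀ B : Set X, IsBounded B → Attracts S B D)
    (hinf : ∀ M : ℝ, ∃ T : ℝ, ∀ t ≥ T, ∀ u ∈ D, M ≤ ‖S t u‖)
    (C : Set X) (hCD : C ⊆ D)
    (hCinv : ∀ t : ℝ, 0 ≤ t → S t '' C = C) :
    C = ∅ := by
  by_contra h
  obtain ⟨x, hx⟩ := Set.nonempty_iff_ne_empty.mpr h
  obtain ⟨T, hT⟩ := hinf (‖x‖ + 1)
  set t := max T 0 with ht
  have ht0 : (0 : ℝ) ≤ t := le_max_right _ _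
  have : x ∈ S t '' C := (hCinv t ht0).symm ▸ hx
  obtain ⟨y, hyC, hyx⟩ := this
  have := hT t (le_max_left _ _) y (hCD hyC)
  rw [hyx] at this
  linarith
end

section
/- Let X be a real Hilbert space, K ⊆ X a closed linear subspace, P the orthogonal projection onto K, f ∈ K with f ≠ 0, and ζ, ω > 0. Let S be a semigroup on X satisfying, for all u₀ ∈ X and t ≥ 0: (gr) ‖(I−P)S(t)u₀‖² ≤ e^{−ζt}‖(I−P)u₀‖² + ω; (fd) ⟨f, P S(t)u₀⟩ = ⟨f, P u₀⟩ + t‖f‖²; (uk2) ‖P S(t)u₀‖² = ‖P u₀‖² + t²‖f‖⁴ + 2t‖f‖²⟨f, P u₀⟩. Then J = ∅, where J := {ξ(0) : ξ is a bounded-in-the-past complete trajectory of S}. -/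
open Set Filter Bornology
open scoped RealInnerProductSpace

/-- The set `J` of values at time `0` of bounded-in-the-past complete trajectories of `S`. -/
def pastBoundedPoints {X : Type*} [NormedAddCommGroup X] (S : ℝ → X → X) : Set X :=
  {x | ∃ ξ : ℝ → X, (∀ t : ℝ, 0 ≤ t → ∀ s : ℝ, S t (ξ s) = ξ (t + s)) ∧
    IsBounded (ξ '' Iic 0) ∧ ξ 0 = x}

/-- Under the decay estimate (gr) for the non-Killing component and the growth
identities (fd), (uk2) for the Killing component driven by a nonzero constant
forcing `f ∈ K`, the set `J` of bounded-in-the-past complete trajectories is empty. -/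
theorem stmt10 {X : Type*} [NormedAddCommGroup X] [InnerProductSpace ℝ X] [CompleteSpace X]
    (K : Submodule ℝ X) [CompleteSpace K]
    (f : X) (hfK : f ∈ K) (hf : f ≠ 0)
    (ζ ω : ℝ) (hζ : 0 < ζ) (hω : 0 < ω)
    (S : ℝ → X → X) (hS0 : S 0 = id)
    (hSadd : ∀ t s : ℝ, 0 ≤ t → 0 ≤ s → S (t + s) = S t ∘ S s)
    (hgr : ∀ (u₀ : X) (t : ℝ), 0 ≤ t →
      ‖S t u₀ - (K.orthogonalProjectionOnto (S t u₀) : X)‖ ^ 2 ≤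
        Real.exp (-ζ * t) * ‖u₀ - (K.orthogonalProjectionOnto u₀ : X)‖ ^ 2 + ω)
    (hfd : ∀ (u₀ : X) (t : ℝ), 0 ≤ t →
      ⟪f, (K.orthogonalProjectionOnto (S t u₀) : X)⟫ =
        ⟪f, (K.orthogonalProjectionOnto u₀ : X)⟫ + t * ‖f‖ ^ 2)
    (huk2 : ∀ (u₀ : X) (t : ℝ), 0 ≤ t →
      ‖(K.orthogonalProjectionOnto (S t u₀) : X)‖ ^ 2 =
        ‖(K.orthogonalProjectionOnto u₀ : X)‖ ^ 2 + t ^ 2 * ‖f‖ ^ 4 +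
          2 * t * ‖f‖ ^ 2 * ⟪f, (K.orthogonalProjectionOnto u₀ : X)⟫) :
    pastBoundedPoints S = ∅ := by
  ext x
  simp only [mem_empty_iff_false, iff_false]
  rintro ⟨ξ, hξ, hbdd, rfl⟩
  obtain ⟨M, hM⟩ := (isBounded_iff_forall_norm_le).1 hbdd
  have hf2 : (0:ℝ) < ‖f‖ ^ 2 := pow_pos (norm_pos_iff.2 hf) 2
  have key : ∀ t : ℝ, 0 ≤ t →
      ⟪f, (K.orthogonalProjectionOnto (ξ 0) : X)⟫ =
        ⟪f, (K.orthogonalProjectionOnto (ξ (-t)) : X)⟫ + t * ‖f‖ ^ 2 := by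
    intro t ht
    have := hfd (ξ (-t)) t ht
    rwa [hξ t ht (-t), add_neg_cancel] at this
  have hbound : ∀ t : ℝ, 0 ≤ t →
      t * ‖f‖ ^ 2 ≤ |⟪f, (K.orthogonalProjectionOnto (ξ 0) : X)⟫| + ‖f‖ * M := by
    intro t ht
    have h1 := key t ht
    have h2 : ‖ξ (-t)‖ ≤ M := hM _ ⟨-t, by simpa using neg_nonpos.2 ht, rfl⟩
    have hP : ‖(K.orthogonalProjectionOnto (ξ (-t)) : X)‖ ≤ M := by
      calc ‖(K.orthogonalProjectionOnto (ξ (-t)) : X)‖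
          ≤ ‖K.orthogonalProjectionOnto‖ * ‖ξ (-t)‖ := by
            simpa using K.orthogonalProjectionOnto.le_opNorm (ξ (-t))
        _ ≤ 1 * ‖ξ (-t)‖ := by
            exact mul_le_mul_of_nonneg_right (Submodule.orthogonalProjectionOnto_norm_le K) (norm_nonneg _)
        _ ≤ M := by simpa using h2
    have h3 : |⟪f, (K.orthogonalProjectionOnto (ξ (-t)) : X)⟫| ≤ ‖f‖ * M := by
      refine (abs_real_inner_le_norm _ _).trans ?_
      exact mul_le_mul_of_nonneg_left hP (norm_nonneg f)
    have h4 := le_abs_self ⟪f, (K.orthogonalProjectionOnto (ξ 0) : X)⟫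
    have h5 := neg_abs_le ⟪f, (K.orthogonalProjectionOnto (ξ (-t)) : X)⟫
    linarith
  set C := |⟪f, (K.orthogonalProjectionOnto (ξ 0) : X)⟫| + ‖f‖ * M with hC
  have hCnn : 0 ≤ C := by have := hbound 0 le_rfl; linarith
  have := hbound ((C + 1) / ‖f‖ ^ 2) (div_nonneg (by linarith) hf2.le)
  rw [div_mul_cancel₀ _ hf2.ne'] at this
  linarith
end

section
/- Let X be a real Hilbert space, K ⊆ X a closed linear subspace, P the orthogonal projection onto K, f ∈ K, and ζ, ω > 0. Let S be a semigroup on X satisfying, for all u₀ ∈ X and t ≥ 0: (gr) ‖(I−P)S(t)u₀‖² ≤ e^{−ζt}‖(I−P)u₀‖² + ω and (fd) ⟨f, P S(t)u₀⟩ = ⟨f, P u₀⟩ + t‖f‖², with f ≠ 0. Then the closed set B := {v ∈ X : ‖(I−P)v‖ ≤ √(1/2 + ω) and ⟨f, Pv⟩ ≥ 0} is absorbing: for every bounded set B₀ ⊆ X there exists t* ≥ 0, depending only on sup_{u ∈ B₀} ‖u‖, such that S(t)B₀ ⊆ B for all t ≥ t*. -/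
open Set Filter Bornology
open scoped RealInnerProductSpace

/-- The closed set `B = {v : ‖(I−P)v‖ ≤ √(1/2+ω), ⟨f, Pv⟩ ≥ 0}` is absorbing:
every bounded set `B₀` enters `B` after a time `t*` depending only on a bound
`R` for the norms of the elements of `B₀`. -/
theorem stmt11 {X : Type*} [NormedAddCommGroup X] [InnerProductSpace ℝ X] [CompleteSpace X]
    (K : Submodule ℝ X) [CompleteSpace K]
    (f : X) (hfK : f ∈ K) (hf : f ≠ 0)
    (ζ ω : ℝ) (hζ : 0 < ζ) (hω : 0 < ω)
    (S : ℝ → X → X) (hS0 : S 0 = id)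
    (hSadd : ∀ t s : ℝ, 0 ≤ t → 0 ≤ s → S (t + s) = S t ∘ S s)
    (hgr : ∀ (u₀ : X) (t : ℝ), 0 ≤ t →
      ‖S t u₀ - (K.orthogonalProjectionOnto (S t u₀) : X)‖ ^ 2 ≤
        Real.exp (-ζ * t) * ‖u₀ - (K.orthogonalProjectionOnto u₀ : X)‖ ^ 2 + ω)
    (hfd : ∀ (u₀ : X) (t : ℝ), 0 ≤ t →
      ⟪f, (K.orthogonalProjectionOnto (S t u₀) : X)⟫ =
        ⟪f, (K.orthogonalProjectionOnto u₀ : X)⟫ + t * ‖f‖ ^ 2) :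
    ∃ τ : ℝ → ℝ, (∀ R : ℝ, 0 ≤ τ R) ∧
      ∀ (R : ℝ) (B₀ : Set X), (∀ u ∈ B₀, ‖u‖ ≤ R) →
        ∀ t ≥ τ R, ∀ u ∈ B₀,
          ‖S t u - (K.orthogonalProjectionOnto (S t u) : X)‖ ≤ Real.sqrt (1 / 2 + ω) ∧
          0 ≤ ⟪f, (K.orthogonalProjectionOnto (S t u) : X)⟫ := by
  have hfnorm : (0:ℝ) < ‖f‖ := norm_pos_iff.mpr hf
  refine ⟨fun R => max (ζ⁻¹ * Real.log (2*R^2+1)) (max (R/‖f‖) 0), ?_, ?_⟩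
  · intro R
    have hlog : 0 ≤ Real.log (2*R^2+1) := Real.log_nonneg (by nlinarith [sq_nonneg R])
    exact le_max_of_le_left (mul_nonneg (inv_pos.mpr hζ).le hlog)
  · intro R B₀ hB₀ t ht u hu
    have hRu := hB₀ u hu
    have hR0 : (0:ℝ) ≤ R := le_trans (norm_nonneg u) hRu
    have ht0 : 0 ≤ t := le_trans (le_max_of_le_right (le_max_right _ _)) ht
    have hpos : (0:ℝ) < 2*R^2+1 := by nlinarith [sq_nonneg R]
    -- Pythagoras: ‖u - Pu‖ ≤ ‖u‖
    have hperp : ⟪(K.orthogonalProjectionOnto u : X), u - (K.orthogonalProjectionOnto u : X)⟫ = 0 := by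
      have h1 : u - (K.orthogonalProjectionOnto u : X) ∈ Kᗮ :=
        K.sub_starProjection_mem_orthogonal u
      exact (Submodule.mem_orthogonal K _).1 h1 _ (K.orthogonalProjectionOnto u).2
    have hpyth : ‖u - (K.orthogonalProjectionOnto u : X)‖ ≤ ‖u‖ := by
      have := norm_add_sq_real (K.orthogonalProjectionOnto u : X) (u - (K.orthogonalProjectionOnto u : X))
      rw [hperp] at this
      simp only [add_sub_cancel] at this
      nlinarith [norm_nonneg (K.orthogonalProjectionOnto u : X), norm_nonneg u,
        norm_nonneg (u - (K.orthogonalProjectionOnto u : X))]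
    constructor
    · -- norm bound
      have h1 := hgr u t ht0
      have hexp : Real.exp (-ζ*t) ≤ (2*R^2+1)⁻¹ := by
        have htlog : ζ⁻¹ * Real.log (2*R^2+1) ≤ t :=
          le_trans (le_max_left _ _) ht
        have : Real.log (2*R^2+1) ≤ ζ * t := by
          rw [← inv_mul_le_iff₀ hζ] at *
          linarith
        calc Real.exp (-ζ*t) ≤ Real.exp (-Real.log (2*R^2+1)) := by
              apply Real.exp_le_exp.mpr; linarith
          _ = (2*R^2+1)⁻¹ := by rw [Real.exp_neg, Real.exp_log hpos]
      have hkey : ‖S t u - (K.orthogonalProjectionOnto (S t u) : X)‖ ^ 2 ≤ 1/2 + ω := by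
        have hsq : ‖u - (K.orthogonalProjectionOnto u : X)‖ ^ 2 ≤ R^2 := by
          nlinarith [norm_nonneg (u - (K.orthogonalProjectionOnto u : X))]
        have hmul : Real.exp (-ζ*t) * ‖u - (K.orthogonalProjectionOnto u : X)‖ ^ 2 ≤
            (2*R^2+1)⁻¹ * R^2 := by
          have he0 : 0 ≤ Real.exp (-ζ*t) := (Real.exp_pos _).le
          nlinarith [norm_nonneg (u - (K.orthogonalProjectionOnto u : X))]
        have hhalf : (2*R^2+1)⁻¹ * R^2 ≤ 1/2 := by
          rw [inv_mul_le_iff₀ hpos]; nlinarith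
        linarith
      have : (0:ℝ) ≤ 1/2 + ω := by linarith
      rw [show Real.sqrt (1/2 + ω) = Real.sqrt (1/2 + ω) from rfl,
        ← Real.sqrt_sq (norm_nonneg (S t u - (K.orthogonalProjectionOnto (S t u) : X)))]
      exact Real.sqrt_le_sqrt hkey
    · -- inner product bound
      have h2 := hfd u t ht0
      have hPnorm : ‖(K.orthogonalProjectionOnto u : X)‖ ≤ ‖u‖ := by
        have h := K.orthogonalProjectionOnto.le_opNorm u
        have h2 := K.orthogonalProjectionOnto_norm_le
        have hco : ‖K.orthogonalProjectionOnto u‖ = ‖(K.orthogonalProjectionOnto u : X)‖ := rfl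
        rw [hco] at h
        nlinarith [norm_nonneg u]
      have hinner : -(‖f‖ * R) ≤ ⟪f, (K.orthogonalProjectionOnto u : X)⟫ := by
        have := abs_real_inner_le_norm f (K.orthogonalProjectionOnto u : X)
        have hb : ‖f‖ * ‖(K.orthogonalProjectionOnto u : X)‖ ≤ ‖f‖ * R :=
          mul_le_mul_of_nonneg_left (le_trans hPnorm hRu) hfnorm.le
        cases' abs_le.mp this with hl hr
        linarith
      have htR : R/‖f‖ ≤ t := le_trans (le_max_of_le_right (le_max_left _ _)) ht
      have : ‖f‖ * R ≤ t * ‖f‖^2 := by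
        rw [div_le_iff₀ hfnorm] at htR
        nlinarith
      rw [h2]
      linarith
end
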